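/- Let T be a spanning tree on n ≥ 6 points placed at the vertices of a regular n-gon inscribed in a circle (i.e., points p_j = (cos(2πj/n), sin(2πj/n)) for j = 0,…,n−1). Then the spanning ratio of T is at least n/(2π); that is, there exist two points x, y among them such that the length of the unique path in T between x and y is at least (n/(2π))·dist(x,y). -/

import Mathlib

/-- The total Euclidean length of a walk, with vertices placed by `p`. -/
noncomputable def walkLength {n : ℕ} (p : Fin n → EuclideanSpace ℝ (Fin 2))
    {T : SimpleGraph (Fin n)} {x y : Fin n} (w : T.Walk x y) : ℝ :=
  (w.darts.map (fun d => dist (p d.toProd.1) (p d.toProd.2))).sum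

open SimpleGraph Real Finset
open Fin.NatCast

variable {n : ℕ}

lemma walkLength_nil (p : Fin n → EuclideanSpace ℝ (Fin 2)) {T : SimpleGraph (Fin n)}
    {x : Fin n} : walkLength p (SimpleGraph.Walk.nil : T.Walk x x) = 0 := rfl

lemma walkLength_cons (p : Fin n → EuclideanSpace ℝ (Fin 2)) {T : SimpleGraph (Fin n)}
    {x v y : Fin n} (h : T.Adj x v) (w : T.Walk v y) :
    walkLength p (SimpleGraph.Walk.cons h w) = dist (p x) (p v) + walkLength p w := by
  simp [walkLength]

lemma walkLength_append (p : Fin n → EuclideanSpace ℝ (Fin 2)) {T : SimpleGraph (Fin n)}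
    {x v y : Fin n} (w1 : T.Walk x v) (w2 : T.Walk v y) :
    walkLength p (w1.append w2) = walkLength p w1 + walkLength p w2 := by
  simp [walkLength, SimpleGraph.Walk.darts_append]

lemma dist_le_walkLength (p : Fin n → EuclideanSpace ℝ (Fin 2)) {T : SimpleGraph (Fin n)}
    {x y : Fin n} (w : T.Walk x y) : dist (p x) (p y) ≤ walkLength p w := by
  induction w with
  | nil => simp [walkLength_nil]
  | @cons a b c h q ih =>
    rw [walkLength_cons]
    calc dist (p a) (p c) ≤ dist (p a) (p b) + dist (p b) (p c) := dist_triangle _ _ _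
    _ ≤ dist (p a) (p b) + walkLength p q := by linarith

lemma walkLength_nonneg (p : Fin n → EuclideanSpace ℝ (Fin 2)) {T : SimpleGraph (Fin n)}
    {x y : Fin n} (w : T.Walk x y) : 0 ≤ walkLength p w := by
  induction w with
  | nil => simp [walkLength_nil]
  | cons h q ih => rw [walkLength_cons]; positivity

/-- `b` is reachable from `a` by a walk avoiding `c`. -/
def ReachAvoid (T : SimpleGraph (Fin n)) (c a b : Fin n) : Prop :=
  ∃ w : T.Walk a b, c ∉ w.support

lemma ReachAvoid.symm {T : SimpleGraph (Fin n)} {c a b : Fin n}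
    (h : ReachAvoid T c a b) : ReachAvoid T c b a := by
  obtain ⟨w, hw⟩ := h
  exact ⟨w.reverse, by rwa [SimpleGraph.Walk.support_reverse, List.mem_reverse]⟩

lemma ReachAvoid.trans {T : SimpleGraph (Fin n)} {c a b d : Fin n}
    (h1 : ReachAvoid T c a b) (h2 : ReachAvoid T c b d) : ReachAvoid T c a d := by
  obtain ⟨w1, hw1⟩ := h1; obtain ⟨w2, hw2⟩ := h2
  refine ⟨w1.append w2, ?_⟩
  rw [SimpleGraph.Walk.mem_support_append_iff]
  tauto

lemma ReachAvoid.ne_start {T : SimpleGraph (Fin n)} {c a b : Fin n}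
    (h : ReachAvoid T c a b) : a ≠ c := by
  obtain ⟨w, hw⟩ := h
  exact fun h' => hw (h' ▸ w.start_mem_support)

lemma ReachAvoid.ne_end {T : SimpleGraph (Fin n)} {c a b : Fin n}
    (h : ReachAvoid T c a b) : b ≠ c := by
  obtain ⟨w, hw⟩ := h
  exact fun h' => hw (h' ▸ w.end_mem_support)

lemma ReachAvoid.refl {T : SimpleGraph (Fin n)} {c a : Fin n} (h : a ≠ c) :
    ReachAvoid T c a a := ⟨SimpleGraph.Walk.nil, by simp [Ne.symm h]⟩

open Classical in
/-- The component of `a` in `T` with `c` removed. -/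
noncomputable def comp (T : SimpleGraph (Fin n)) (c a : Fin n) : Finset (Fin n) :=
  Finset.univ.filter (fun b => ReachAvoid T c a b)

lemma mem_comp {T : SimpleGraph (Fin n)} {c a b : Fin n} :
    b ∈ comp T c a ↔ ReachAvoid T c a b := by simp [comp]

lemma comp_eq_of_reachAvoid {T : SimpleGraph (Fin n)} {c a b : Fin n}
    (h : ReachAvoid T c a b) : comp T c a = comp T c b := by
  ext d
  simp only [mem_comp]
  exact ⟨fun h' => h.symm.trans h', fun h' => h.trans h'⟩


-- In a tree, the support of any path a→b is contained in the support of any walk a→b.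
lemma path_support_subset {T : SimpleGraph (Fin n)} (hT : T.IsTree) {a b : Fin n}
    {P : T.Walk a b} (hP : P.IsPath) (W : T.Walk a b) : P.support ⊆ W.support := by
  have hu := hT.existsUnique_path a b
  have h1 : P = W.bypass := hu.unique hP W.bypass_isPath
  rw [h1]
  exact W.support_bypass_subset

-- If every walk a→b passes through u, then every path P from a to b contains u.
lemma mem_path_of_not_reachAvoid {T : SimpleGraph (Fin n)} {u a b : Fin n}
    (h : ¬ ReachAvoid T u a b) (P : T.Walk a b) : u ∈ P.support := by
  by_contra hu
  exact h ⟨P, hu⟩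

-- In a path from b to c, the prefix up to u avoids c (if u ≠ c).
lemma takeUntil_avoids {T : SimpleGraph (Fin n)} {b c u : Fin n} {P : T.Walk b c}
    (hP : P.IsPath) (hu : u ∈ P.support) (huc : u ≠ c) :
    c ∉ (P.takeUntil u hu).support := by
  intro hc
  have hspec := P.take_spec hu
  have hnodup : P.support.Nodup := hP.support_nodup
  rw [← hspec, SimpleGraph.Walk.support_append] at hnodup
  have hdisj := List.disjoint_of_nodup_append hnodup
  have hc2 : c ∈ (P.dropUntil u hu).support.tail := by
    have := (P.dropUntil u hu).end_mem_support
    rw [SimpleGraph.Walk.support_eq_cons] at this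
    rcases List.mem_cons.mp this with h | h
    · exact absurd h.symm huc
    · exact h
  exact hdisj hc hc2

-- C1: components on the two sides of edge c–u are disjoint.
lemma comp_disjoint {T : SimpleGraph (Fin n)} (hT : T.IsTree) {c u : Fin n}
    (hadj : T.Adj c u) : Disjoint (comp T u c) (comp T c u) := by
  rw [Finset.disjoint_left]
  intro w hw1 hw2
  obtain ⟨W1, hW1⟩ := mem_comp.mp hw1   -- walk c → w avoiding u
  obtain ⟨W2, hW2⟩ := mem_comp.mp hw2   -- walk u → w avoiding c
  -- the unique path c → w is cons (c~u) (bypass of W2); it contains u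
  have hP2 : W2.bypass.IsPath := W2.bypass_isPath
  have hcP2 : c ∉ W2.bypass.support := fun h => hW2 (W2.support_bypass_subset h)
  have hQ : (SimpleGraph.Walk.cons hadj W2.bypass).IsPath := hP2.cons hcP2
  have hsub := path_support_subset hT hQ W1
  have : u ∈ W1.support := by
    apply hsub
    rw [SimpleGraph.Walk.support_cons]
    exact List.mem_cons_of_mem _ W2.bypass.start_mem_support
  exact hW1 this

-- C2: components of T−u not containing c sit inside comp T c u, minus u.
lemma comp_subset {T : SimpleGraph (Fin n)} (hT : T.IsTree) {c u b : Fin n}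
    (hadj : T.Adj c u) (hbc : ¬ ReachAvoid T u b c) (_hb : b ≠ u) :
    comp T u b ⊆ comp T c u \ {u} := by
  have huc : u ≠ c := hadj.ne'
  have hbc' : b ≠ c := by
    rintro rfl
    exact hbc ⟨SimpleGraph.Walk.nil, by simp [huc]⟩
  -- the unique path b → c contains u; its prefix shows ReachAvoid T c b u
  obtain ⟨W0⟩ := hT.isConnected.preconnected b c
  set P := W0.bypass with hPdef
  have hPpath : P.IsPath := W0.bypass_isPath
  have huP : u ∈ P.support := mem_path_of_not_reachAvoid hbc P
  have hpre : ReachAvoid T c b u :=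
    ⟨P.takeUntil u huP, takeUntil_avoids hPpath huP huc⟩
  intro w hw
  obtain ⟨W, hW⟩ := mem_comp.mp hw    -- walk b → w avoiding u
  have hwu : w ≠ u := fun h => hW (h ▸ W.end_mem_support)
  rw [Finset.mem_sdiff, Finset.mem_singleton]
  refine ⟨?_, hwu⟩
  rw [mem_comp]
  -- suffices: ReachAvoid T c b w, then compose with ReachAvoid T c u b
  have hbw : ReachAvoid T c b w := by
    by_contra hcon
    -- then the unique path b → w contains c; its prefix to c is THE path b→c, containing u
    have hPw : W.bypass.IsPath := W.bypass_isPath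
    have hcPw : c ∈ W.bypass.support := mem_path_of_not_reachAvoid hcon W.bypass
    have hpre2 : (W.bypass.takeUntil c hcPw).IsPath := hPw.takeUntil hcPw
    have heq : P = W.bypass.takeUntil c hcPw :=
      (hT.existsUnique_path b c).unique hPpath hpre2
    have : u ∈ W.support := by
      apply W.support_bypass_subset
      apply W.bypass.support_takeUntil_subset hcPw
      rw [← heq]; exact huP
    exact hW this
  exact hpre.symm.trans hbw

-- from a vertex a ≠ c, find the neighbor u of c in the direction of a
lemma exists_nbr {T : SimpleGraph (Fin n)} (hT : T.IsTree) {c a : Fin n} (h : a ≠ c) :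
    ∃ u : Fin n, T.Adj c u ∧ ReachAvoid T c a u := by
  obtain ⟨W⟩ := hT.isConnected.preconnected c a
  have hP : W.bypass.IsPath := W.bypass_isPath
  set Q := W.bypass with hQ
  cases hq : Q with
  | nil => exact absurd rfl h.symm
  | cons hadj q =>
    refine ⟨_, hadj, ?_⟩
    have : Q.IsPath := hP
    rw [hq] at this
    have hc : c ∉ q.support := by
      have := (SimpleGraph.Walk.cons_isPath_iff _ _).mp this
      exact this.2
    exact ⟨q.reverse, by rwa [SimpleGraph.Walk.support_reverse, List.mem_reverse]⟩

lemma comp_center_empty {T : SimpleGraph (Fin n)} (c : Fin n) : comp T c c = ∅ := by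
  ext b; simp only [mem_comp, Finset.notMem_empty, iff_false]
  exact fun h => h.ne_start rfl

lemma exists_centroid {T : SimpleGraph (Fin n)} (hT : T.IsTree) (hn : 0 < n) :
    ∃ c : Fin n, ∀ a : Fin n, 2 * (comp T c a).card ≤ n := by
  haveI : NeZero n := ⟨hn.ne'⟩
  set g : Fin n → ℕ := fun c => Finset.univ.sup (fun a => (comp T c a).card) with hg
  obtain ⟨c, -, hc⟩ := Finset.exists_min_image Finset.univ g ⟨0, Finset.mem_univ 0⟩
  refine ⟨c, fun a => ?_⟩
  by_contra hbig
  push_neg at hbig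
  have hac : a ≠ c := by
    rintro rfl
    rw [comp_center_empty] at hbig; simp at hbig
  obtain ⟨u, hadj, hau⟩ := exists_nbr hT hac
  have hcompeq : comp T c a = comp T c u := comp_eq_of_reachAvoid hau
  rw [hcompeq] at hbig
  set K := (comp T c u).card with hK
  have hKg : K ≤ g c := Finset.le_sup (f := fun a => (comp T c a).card) (Finset.mem_univ u)
  have huK : u ∈ comp T c u := mem_comp.mpr (ReachAvoid.refl hadj.ne')
  have hKpos : 0 < K := Finset.card_pos.mpr ⟨u, huK⟩
  -- every component of T − u has size < K
  have hlt : ∀ b : Fin n, (comp T u b).card < K := by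
    intro b
    by_cases hbu : b = u
    · rw [hbu, comp_center_empty]; simpa using hKpos
    by_cases hbc : ReachAvoid T u b c
    · have h1 : comp T u b = comp T u c := comp_eq_of_reachAvoid hbc
      have h2 := comp_disjoint hT hadj
      have h3 : (comp T u c).card + K ≤ n := by
        have := Finset.card_union_of_disjoint h2
        have hle := Finset.card_le_univ ((comp T u c) ∪ (comp T c u))
        simp only [Finset.card_univ, Fintype.card_fin] at hle
        omega
      rw [h1]; omega
    · have h1 := comp_subset hT hadj hbc hbu
      have h2 : (comp T u b).card ≤ (comp T c u \ {u}).card := Finset.card_le_card h1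
      have h3 : (comp T c u \ {u}).card = K - 1 := by
        rw [Finset.card_sdiff_of_subset (Finset.singleton_subset_iff.mpr huK)]
        simp [hK]
      omega
  have hgu : g u < K := by
    have : g u ≤ K - 1 := Finset.sup_le (fun b _ => by have := hlt b; omega)
    omega
  have := hc u (Finset.mem_univ u)
  omega

-- chord formula on the unit circle
lemma chord_formula (A B : ℝ) :
    (cos A - cos B)^2 + (sin A - sin B)^2 = 2 - 2 * cos (A - B) := by
  rw [cos_sub]
  linear_combination sin_sq_add_cos_sq A + sin_sq_add_cos_sq B

lemma sqrt_two_sub_cos (t : ℝ) : Real.sqrt (2 - 2 * cos t) = 2 * |sin (t/2)| := by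
  have h : 2 - 2 * cos t = (2 * |sin (t/2)|)^2 := by
    have := Real.sin_sq_eq_half_sub (t/2)
    rw [mul_pow, sq_abs]
    have h2 : cos (2 * (t/2)) = cos t := by ring_nf
    nlinarith [this, h2]
  rw [h, Real.sqrt_sq (by positivity)]

-- sin t ≥ 1/2 on [π/6, 5π/6]
lemma sin_ge_half {t : ℝ} (h1 : π/6 ≤ t) (h2 : t ≤ π - π/6) : 1/2 ≤ sin t := by
  have hpi := Real.pi_pos
  rcases le_total t (π/2) with h | h
  · have := Real.sin_pi_div_six
    calc (1:ℝ)/2 = sin (π/6) := by rw [Real.sin_pi_div_six]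
    _ ≤ sin t := by
        apply Real.strictMonoOn_sin.monotoneOn ⟨by linarith, by linarith⟩ ⟨by linarith, by linarith⟩ h1
  · rw [← Real.sin_pi_sub]
    calc (1:ℝ)/2 = sin (π/6) := by rw [Real.sin_pi_div_six]
    _ ≤ sin (π - t) := by
        apply Real.strictMonoOn_sin.monotoneOn ⟨by linarith, by linarith⟩ ⟨by linarith, by linarith⟩ (by linarith)

variable {n : ℕ}

lemma dist_pts (hpos : 0 < n) (p : Fin n → EuclideanSpace ℝ (Fin 2))
    (hp : ∀ j : Fin n, p j 0 = Real.cos (2 * Real.pi * (j : ℝ) / (n : ℝ)) ∧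
                       p j 1 = Real.sin (2 * Real.pi * (j : ℝ) / (n : ℝ)))
    (i j : Fin n) :
    dist (p i) (p j) = 2 * |sin (π * (((i : ℕ) : ℝ) - ((j : ℕ) : ℝ)) / n)| := by
  have hn0 : (n:ℝ) ≠ 0 := Nat.cast_ne_zero.mpr hpos.ne'
  rw [EuclideanSpace.dist_eq]
  rw [Fin.sum_univ_two]
  rw [Real.dist_eq, Real.dist_eq, sq_abs, sq_abs]
  rw [(hp i).1, (hp i).2, (hp j).1, (hp j).2]
  rw [chord_formula]
  have hAB : 2 * π * (i:ℝ) / n - 2 * π * (j:ℝ) / n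
      = 2 * (π * (((i:ℕ):ℝ) - ((j:ℕ):ℝ)) / n) := by
    push_cast
    field_simp
  rw [hAB]
  have := sqrt_two_sub_cos (2 * (π * (((i:ℕ):ℝ) - ((j:ℕ):ℝ)) / n))
  rw [show (2 : ℝ) * (π * (((i:ℕ):ℝ) - ((j:ℕ):ℝ)) / n) / 2
      = π * (((i:ℕ):ℝ) - ((j:ℕ):ℝ)) / n by ring] at this
  rw [← this]

lemma dist_step [NeZero n] (hpos : 0 < n) (p : Fin n → EuclideanSpace ℝ (Fin 2))
    (hp : ∀ j : Fin n, p j 0 = Real.cos (2 * Real.pi * (j : ℝ) / (n : ℝ)) ∧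
                       p j 1 = Real.sin (2 * Real.pi * (j : ℝ) / (n : ℝ)))
    (c : Fin n) (d : ℕ) (hd : d < n) :
    dist (p c) (p (c + (d : Fin n))) = 2 * sin (π * d / n) := by
  have hn0 : (n:ℝ) ≠ 0 := Nat.cast_ne_zero.mpr hpos.ne'
  have hval : ((d : Fin n) : ℕ) = d := Fin.val_cast_of_lt hd
  have hsum : (c + (d : Fin n)).val = (c.val + d) % n := by
    rw [Fin.add_def, hval]
  have hsin_nonneg : 0 ≤ sin (π * d / n) := by
    apply Real.sin_nonneg_of_nonneg_of_le_pi
    · positivity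
    · rw [div_le_iff₀ (by positivity)]
      have : (d:ℝ) ≤ n := by exact_mod_cast hd.le
      nlinarith [Real.pi_pos]
  rw [dist_pts hpos p hp, hsum]
  rcases Nat.lt_or_ge (c.val + d) n with h | h
  · rw [Nat.mod_eq_of_lt h]
    push_cast
    rw [show π * ((c:ℝ) - ((c:ℝ) + (d:ℝ))) / n = -(π * d / n) by ring, Real.sin_neg,
      abs_neg, abs_of_nonneg hsin_nonneg]
  · have hmod : (c.val + d) % n = c.val + d - n := by
      have h2 : c.val + d < 2 * n := by have := c.isLt; omega
      rw [Nat.mod_eq_sub_mod h, Nat.mod_eq_of_lt (by omega)]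
    rw [hmod]
    have hcast : ((c.val + d - n : ℕ) : ℝ) = (c:ℝ) + d - n := by
      push_cast [Nat.cast_sub h]
      ring
    rw [hcast]
    rw [show π * ((c:ℝ) - ((c:ℝ) + (d:ℝ) - n)) / n = π - π * d / n by field_simp; ring,
      Real.sin_pi_sub, abs_of_nonneg hsin_nonneg]

/-- Any spanning tree on n ≥ 6 points spread evenly on a circle has spanning
ratio at least n/(2π): some pair of points is joined in the tree only by paths
of length at least (n/(2π)) times their Euclidean distance. -/
theorem spanning_tree_on_regular_ngon_ratio
    (n : ℕ) (hn : 6 ≤ n) (T : SimpleGraph (Fin n)) (hT : T.IsTree)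
    (p : Fin n → EuclideanSpace ℝ (Fin 2))
    (hp : ∀ j : Fin n, p j 0 = Real.cos (2 * Real.pi * (j : ℝ) / (n : ℝ)) ∧
                       p j 1 = Real.sin (2 * Real.pi * (j : ℝ) / (n : ℝ))) :
    ∃ x y : Fin n, x ≠ y ∧ ∀ w : T.Walk x y,
      ((n : ℝ) / (2 * Real.pi)) * dist (p x) (p y) ≤ walkLength p w := by
  have hpos : 0 < n := by omega
  haveI : NeZero n := ⟨hpos.ne'⟩
  have hpi := Real.pi_pos
  have hn0 : (n:ℝ) ≠ 0 := Nat.cast_ne_zero.mpr hpos.ne'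
  -- centroid
  obtain ⟨c, hc⟩ := exists_centroid hT hpos
  set m : ℕ := (n + 5) / 6 with hm
  have hm1 : 1 ≤ m := by omega
  have hm6 : n ≤ 6 * m := by omega
  have hm6' : 6 * m ≤ n + 5 := by omega
  have hmn : 2 * m < n := by omega
  -- find a "far" consecutive pair separated by c
  have hkey : ∃ k : ℕ, m ≤ k ∧ k < n - m ∧
      ¬ ReachAvoid T c (c + (k : Fin n)) (c + ((k+1 : ℕ) : Fin n)) := by
    by_contra hcon
    push_neg at hcon
    -- then all points of the far arc are in one component
    have hchain : ∀ k : ℕ, m ≤ k → k ≤ n - m →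
        ReachAvoid T c (c + (m : Fin n)) (c + (k : Fin n)) := by
      intro k hk1 hk2
      induction k, hk1 using Nat.le_induction with
      | base =>
        apply ReachAvoid.refl
        intro h
        have : (m : Fin n) = 0 := by
          have := congrArg (fun z => z - c) h
          simpa [add_comm] using this
        have : m % n = 0 := by
          have h2 := congrArg Fin.val this
          simpa [Fin.val_natCast] using h2
        rw [Nat.mod_eq_of_lt (by omega)] at this
        omega
      | succ k hk ih =>
        exact (ih (by omega)).trans (hcon k (by omega) (by omega))
    have hsub : (Finset.Icc m (n - m)).image (fun k : ℕ => c + (k : Fin n)) ⊆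
        comp T c (c + (m : Fin n)) := by
      intro x hx
      rw [Finset.mem_image] at hx
      obtain ⟨k, hk, rfl⟩ := hx
      rw [Finset.mem_Icc] at hk
      exact mem_comp.mpr (hchain k hk.1 hk.2)
    have hinj : ∀ k1 ∈ Finset.Icc m (n - m), ∀ k2 ∈ Finset.Icc m (n - m),
        c + (k1 : Fin n) = c + (k2 : Fin n) → k1 = k2 := by
      intro k1 h1 k2 h2 h
      rw [Finset.mem_Icc] at h1 h2
      have : (k1 : Fin n) = (k2 : Fin n) := by
        have := congrArg (fun z => z - c) h
        simpa [add_comm] using this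
      have := congrArg Fin.val this
      rw [Fin.val_natCast, Fin.val_natCast, Nat.mod_eq_of_lt (by omega),
        Nat.mod_eq_of_lt (by omega)] at this
      exact this
    have hcard : ((Finset.Icc m (n - m)).image (fun k : ℕ => c + (k : Fin n))).card
        = n - 2 * m + 1 := by
      rw [Finset.card_image_of_injOn hinj, Nat.card_Icc]
      omega
    have := Finset.card_le_card hsub
    rw [hcard] at this
    have := hc (c + (m : Fin n))
    omega
  obtain ⟨k, hk1, hk2, hsep⟩ := hkey
  set x := c + (k : Fin n) with hx
  set y := c + ((k+1 : ℕ) : Fin n) with hy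
  have hkn : k < n := by omega
  have hk1n : k + 1 < n := by omega
  -- x ≠ y
  have hxy : x ≠ y := by
    intro h
    have : (k : Fin n) = ((k+1 : ℕ) : Fin n) := by
      have := congrArg (fun z => z - c) h
      simpa [hx, hy, add_comm] using this
    have := congrArg Fin.val this
    rw [Fin.val_natCast, Fin.val_natCast, Nat.mod_eq_of_lt hkn,
      Nat.mod_eq_of_lt hk1n] at this
    omega
  refine ⟨x, y, hxy, fun w => ?_⟩
  -- every walk x → y passes through c
  have hcw : c ∈ w.support := by
    by_contra h
    exact hsep ⟨w, h⟩
  -- distances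
  have hdxy : dist (p x) (p y) = 2 * Real.sin (Real.pi * 1 / n) := by
    have h1 : y = x + ((1:ℕ) : Fin n) := by
      rw [hx, hy]
      have : ((k+1 : ℕ) : Fin n) = (k : Fin n) + ((1:ℕ) : Fin n) := by push_cast; ring
      rw [this, add_assoc]
    rw [h1]
    exact_mod_cast dist_step hpos p hp x 1 (by omega)
  have hdcx : (1:ℝ) ≤ dist (p c) (p x) := by
    rw [hx, dist_step hpos p hp c k hkn]
    have h6k : n ≤ 6 * k := by omega
    have h6k' : 6 * k ≤ 5 * n := by omega
    have hlow : Real.pi / 6 ≤ Real.pi * k / n := by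
      rw [div_le_div_iff₀ (by norm_num) (by positivity)]
      have : (n:ℝ) ≤ 6 * k := by exact_mod_cast h6k
      nlinarith
    have hhigh : Real.pi * k / n ≤ Real.pi - Real.pi / 6 := by
      rw [div_le_iff₀ (by positivity)]
      have : (6:ℝ) * k ≤ 5 * n := by exact_mod_cast h6k'
      nlinarith
    have := sin_ge_half hlow hhigh
    linarith
  -- split the walk at c
  have hsplit : walkLength p w = walkLength p (w.takeUntil c hcw)
      + walkLength p (w.dropUntil c hcw) := by
    conv_lhs => rw [← w.take_spec hcw]
    exact walkLength_append p _ _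
  have hL1 : dist (p x) (p c) ≤ walkLength p (w.takeUntil c hcw) :=
    dist_le_walkLength p _
  have hL2 : (0:ℝ) ≤ walkLength p (w.dropUntil c hcw) := walkLength_nonneg p _
  have hbound : (1:ℝ) ≤ walkLength p w := by
    rw [hsplit]
    have := dist_comm (p x) (p c)
    linarith [hdcx, hL1, hL2, dist_comm (p c) (p x) ▸ hdcx]
  -- the ratio bound
  have hsinle : Real.sin (Real.pi * 1 / n) ≤ Real.pi * 1 / n :=
    Real.sin_le (by positivity)
  have hfinal : ((n : ℝ) / (2 * Real.pi)) * dist (p x) (p y) ≤ 1 := by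
    rw [hdxy]
    have hnpos : (0:ℝ) < n := by exact_mod_cast hpos
    calc ((n : ℝ) / (2 * Real.pi)) * (2 * Real.sin (Real.pi * 1 / n))
        ≤ ((n : ℝ) / (2 * Real.pi)) * (2 * (Real.pi * 1 / n)) := by
          apply mul_le_mul_of_nonneg_left (by linarith) (by positivity)
      _ = 1 := by field_simp
  linarith
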